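/- Let n ≥ 3 and define p : (0,1)^{n−1} → ℝ by p(x_1,…,x_{n−1}) = (∏_{i=1}^{n−2} x_{σ(i)}) / (1 − x_{σ(n−1)} + ∏_{i=1}^{n−2} x_{σ(i)}), where σ is any permutation of {1,…,n−1} with x_{σ(1)} ≤ ⋯ ≤ x_{σ(n−1)}. Then p is well-defined (the value does not depend on the choice of σ), p maps (0,1)^{n−1} into (0,1), and for each index i and each choice of fixed values of the other n−2 coordinates in (0,1), the resulting one-variable function (0,1) → (0,1) is strictly increasing and surjective. In particular, if x, y ∈ (0,1)^{n−1} satisfy x ≤ y coordinatewise and x ≠ y, then p(x) < p(y). -/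

import Mathlib

noncomputable def pVal {k : ℕ} (σ : Equiv.Perm (Fin (k + 1))) (x : Fin (k + 1) → ℝ) : ℝ :=
  (∏ i ∈ Finset.univ.erase (Fin.last k), x (σ i)) /
    (1 - x (σ (Fin.last k)) + ∏ i ∈ Finset.univ.erase (Fin.last k), x (σ i))

noncomputable def pFun {k : ℕ} (x : Fin (k + 1) → ℝ) : ℝ := pVal (Tuple.sort x) x

namespace S8

variable {k : ℕ}

noncomputable def Mx (x : Fin (k + 1) → ℝ) : ℝ :=
  Finset.univ.sup' ⟨0, Finset.mem_univ 0⟩ x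

noncomputable def Fx (x : Fin (k + 1) → ℝ) : ℝ :=
  (∏ i, x i) / (Mx x * (1 - Mx x) + ∏ i, x i)

theorem le_Mx (x : Fin (k + 1) → ℝ) (i : Fin (k + 1)) : x i ≤ Mx x :=
  Finset.le_sup' x (Finset.mem_univ i)

theorem exists_Mx (x : Fin (k + 1) → ℝ) : ∃ i, Mx x = x i := by
  obtain ⟨i, -, hi⟩ := Finset.exists_mem_eq_sup' (⟨0, Finset.mem_univ 0⟩ :
    (Finset.univ : Finset (Fin (k + 1))).Nonempty) x
  exact ⟨i, hi⟩

theorem Mx_pos {x : Fin (k + 1) → ℝ} (hx : ∀ i, x i ∈ Set.Ioo (0 : ℝ) 1) : 0 < Mx x := by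
  obtain ⟨i, hi⟩ := exists_Mx x
  rw [hi]; exact (hx i).1

theorem Mx_lt_one {x : Fin (k + 1) → ℝ} (hx : ∀ i, x i ∈ Set.Ioo (0 : ℝ) 1) : Mx x < 1 := by
  obtain ⟨i, hi⟩ := exists_Mx x
  rw [hi]; exact (hx i).2

theorem Px_pos {x : Fin (k + 1) → ℝ} (hx : ∀ i, x i ∈ Set.Ioo (0 : ℝ) 1) :
    0 < ∏ i, x i :=
  Finset.prod_pos fun i _ => (hx i).1

theorem denom_pos {x : Fin (k + 1) → ℝ} (hx : ∀ i, x i ∈ Set.Ioo (0 : ℝ) 1) :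
    0 < Mx x * (1 - Mx x) + ∏ i, x i :=
  add_pos (mul_pos (Mx_pos hx) (by linarith [Mx_lt_one hx])) (Px_pos hx)

theorem pVal_eq_Fx {x : Fin (k + 1) → ℝ} (hx : ∀ i, x i ∈ Set.Ioo (0 : ℝ) 1)
    (σ : Equiv.Perm (Fin (k + 1))) (hσ : Monotone (x ∘ σ)) : pVal σ x = Fx x := by
  have hM0 : 0 < Mx x := Mx_pos hx
  have hP0 : 0 < ∏ i, x i := Px_pos hx
  have hMlast : x (σ (Fin.last k)) = Mx x := by
    apply le_antisymm (le_Mx x _)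
    apply Finset.sup'_le
    intro i _
    have h := hσ (Fin.le_last (σ.symm i))
    simpa using h
  have hprod : x (σ (Fin.last k)) * ∏ i ∈ Finset.univ.erase (Fin.last k), x (σ i)
      = ∏ i, x i := by
    rw [Finset.mul_prod_erase Finset.univ (fun i => x (σ i)) (Finset.mem_univ (Fin.last k))]
    exact Equiv.prod_comp σ x
  have hE : ∏ i ∈ Finset.univ.erase (Fin.last k), x (σ i) = (∏ i, x i) / Mx x := by
    rw [eq_div_iff hM0.ne', mul_comm, ← hMlast, hprod]
  have hden : Mx x * (1 - Mx x) + ∏ i, x i ≠ 0 := (denom_pos hx).ne'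
  rw [pVal, hE, hMlast, Fx]
  rw [div_eq_div_iff, div_mul_eq_mul_div, div_eq_iff hM0.ne']
  · field_simp
  · have : 1 - Mx x + (∏ i, x i) / Mx x = (Mx x * (1 - Mx x) + ∏ i, x i) / Mx x := by
      field_simp
    rw [this]
    positivity
  · positivity

theorem pFun_eq_Fx {x : Fin (k + 1) → ℝ} (hx : ∀ i, x i ∈ Set.Ioo (0 : ℝ) 1) :
    pFun x = Fx x :=
  pVal_eq_Fx hx _ (Tuple.monotone_sort x)

theorem Fx_mem {x : Fin (k + 1) → ℝ} (hx : ∀ i, x i ∈ Set.Ioo (0 : ℝ) 1) :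
    Fx x ∈ Set.Ioo (0 : ℝ) 1 := by
  have hP0 := Px_pos hx
  have hd := denom_pos hx
  rw [Set.mem_Ioo, Fx]
  constructor
  · exact div_pos hP0 hd
  · rw [div_lt_one hd]
    nlinarith [Mx_pos hx, Mx_lt_one hx]

/-- key comparison lemma -/
theorem Fx_lt {x y : Fin (k + 1) → ℝ} (hx : ∀ i, x i ∈ Set.Ioo (0 : ℝ) 1)
    (hy : ∀ i, y i ∈ Set.Ioo (0 : ℝ) 1) (hle : ∀ i, x i ≤ y i)
    (i₀ : Fin (k + 1)) (hi₀ : x i₀ < y i₀) : Fx x < Fx y := by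
  have hPx := Px_pos hx
  have hPy := Px_pos hy
  have hMx0 := Mx_pos hx
  have hMy0 := Mx_pos hy
  have hMx1 := Mx_lt_one hx
  have hMy1 := Mx_lt_one hy
  set Qx := (∏ i, x i) / Mx x with hQxdef
  set Qy := (∏ i, y i) / Mx y with hQydef
  have hQx0 : 0 < Qx := div_pos hPx hMx0
  have hQy0 : 0 < Qy := div_pos hPy hMy0
  have hMle : Mx x ≤ Mx y := by
    apply Finset.sup'_le
    intro i _
    exact (hle i).trans (le_Mx y i)
  -- the argmax of y
  obtain ⟨j, hj⟩ := exists_Mx y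
  have hQyE : Qy = ∏ i ∈ Finset.univ.erase j, y i := by
    rw [hQydef, eq_comm, eq_div_iff hMy0.ne', mul_comm, hj,
      Finset.mul_prod_erase Finset.univ y (Finset.mem_univ j)]
  have hEle : ∏ i ∈ Finset.univ.erase j, x i ≤ ∏ i ∈ Finset.univ.erase j, y i :=
    Finset.prod_le_prod (fun i _ => (hx i).1.le) (fun i _ => hle i)
  have hxjE : ∏ i ∈ Finset.univ.erase j, x i = (∏ i, x i) / x j := by
    rw [eq_div_iff (hx j).1.ne', mul_comm,
      Finset.mul_prod_erase Finset.univ x (Finset.mem_univ j)]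
  have hQxle : Qx ≤ ∏ i ∈ Finset.univ.erase j, x i := by
    rw [hxjE, hQxdef]
    gcongr
    · exact (hx j).1
    · exact le_Mx x j
  have hQle : Qx ≤ Qy := by
    rw [hQyE]; exact hQxle.trans hEle
  -- strictness: either max increases or Q increases
  have key : Mx x < Mx y ∨ Qx < Qy := by
    rcases lt_or_eq_of_le hMle with h | hMeq
    · exact Or.inl h
    right
    by_cases hij : i₀ = j
    · -- x j < Mx x strictly, first inequality strict
      have hxj : x j < Mx x := by
        rw [← hij]
        calc x i₀ < y i₀ := hi₀
        _ = Mx x := by rw [hij, ← hj, hMeq]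
      have h1 : Qx < ∏ i ∈ Finset.univ.erase j, x i := by
        rw [hxjE, hQxdef]
        gcongr
        · exact (hx j).1
      calc Qx < ∏ i ∈ Finset.univ.erase j, x i := h1
      _ ≤ ∏ i ∈ Finset.univ.erase j, y i := hEle
      _ = Qy := hQyE.symm
    · have h2 : ∏ i ∈ Finset.univ.erase j, x i < ∏ i ∈ Finset.univ.erase j, y i := by
        exact Finset.prod_lt_prod (fun i _ => (hx i).1) (fun i _ => hle i)
          ⟨i₀, Finset.mem_erase.2 ⟨hij, Finset.mem_univ i₀⟩, hi₀⟩
      calc Qx ≤ ∏ i ∈ Finset.univ.erase j, x i := hQxle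
      _ < ∏ i ∈ Finset.univ.erase j, y i := h2
      _ = Qy := hQyE.symm
  -- convert to the 1/(g+1) form
  have hFx : Fx x = 1 / ((1 - Mx x) / Qx + 1) := by
    rw [Fx, hQxdef]
    field_simp
  have hFy : Fx y = 1 / ((1 - Mx y) / Qy + 1) := by
    rw [Fx, hQydef]
    field_simp
  rw [hFx, hFy]
  have hgx0 : 0 < (1 - Mx x) / Qx := div_pos (by linarith) hQx0
  have hgy0 : 0 ≤ (1 - Mx y) / Qy := le_of_lt (div_pos (by linarith) hQy0)
  apply one_div_lt_one_div_of_lt (by linarith)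
  have hglt : (1 - Mx y) / Qy < (1 - Mx x) / Qx := by
    rcases key with h | h
    · calc (1 - Mx y) / Qy ≤ (1 - Mx y) / Qx := by
            apply div_le_div_of_nonneg_left (by linarith) hQx0 hQle
      _ < (1 - Mx x) / Qx := by apply div_lt_div_of_pos_right (by linarith) hQx0
    · calc (1 - Mx y) / Qy < (1 - Mx y) / Qx := by
            apply div_lt_div_of_pos_left (by linarith) hQx0 h
      _ ≤ (1 - Mx x) / Qx := by
            exact div_le_div_of_nonneg_right (by linarith) hQx0.le
  linarith


theorem update_box {x : Fin (k + 1) → ℝ} (hx : ∀ i, x i ∈ Set.Ioo (0 : ℝ) 1)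
    {j : Fin (k + 1)} {t : ℝ} (ht : t ∈ Set.Ioo (0 : ℝ) 1) :
    ∀ i, Function.update x j t i ∈ Set.Ioo (0 : ℝ) 1 := by
  intro i
  rcases eq_or_ne i j with h | h
  · subst h; rw [Function.update_self]; exact ht
  · rw [Function.update_of_ne h]; exact hx i

theorem surjOn (hk : 1 ≤ k) {x : Fin (k + 1) → ℝ}
    (hx : ∀ i, x i ∈ Set.Ioo (0 : ℝ) 1) (j : Fin (k + 1)) :
    Set.SurjOn (fun t => pFun (Function.update x j t))
      (Set.Ioo (0 : ℝ) 1) (Set.Ioo (0 : ℝ) 1) := by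
  have he : (Finset.univ.erase j).Nonempty := by
    rw [← Finset.card_pos, Finset.card_erase_of_mem (Finset.mem_univ j)]
    simp [hk]
    omega
  set M' : ℝ := (Finset.univ.erase j).sup' he x with hM'def
  set P' : ℝ := ∏ i ∈ Finset.univ.erase j, x i with hP'def
  have hM'mem : ∃ i, M' = x i := by
    obtain ⟨i, -, hi⟩ := Finset.exists_mem_eq_sup' he x
    exact ⟨i, hi⟩
  have hM'0 : 0 < M' := by obtain ⟨i, hi⟩ := hM'mem; rw [hi]; exact (hx i).1
  have hM'1 : M' < 1 := by obtain ⟨i, hi⟩ := hM'mem; rw [hi]; exact (hx i).2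
  have hP'0 : 0 < P' := Finset.prod_pos fun i _ => (hx i).1
  set h : ℝ → ℝ := fun t => (t * P') / (max M' t * (1 - max M' t) + t * P') with hhdef
  -- the formula for Fx of an update
  have hupdM : ∀ t : ℝ, Mx (Function.update x j t) = max M' t := by
    intro t
    apply le_antisymm
    · apply Finset.sup'_le
      intro i _
      rcases eq_or_ne i j with hij | hij
      · subst hij; rw [Function.update_self]; exact le_max_right _ _
      · rw [Function.update_of_ne hij]
        exact le_trans (Finset.le_sup' x (Finset.mem_erase.2 ⟨hij, Finset.mem_univ i⟩))
          (le_max_left _ _)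
    · apply max_le
      · apply Finset.sup'_le
        intro i hi
        have hij : i ≠ j := (Finset.mem_erase.1 hi).1
        have : x i = Function.update x j t i := (Function.update_of_ne hij t x).symm
        rw [this]
        exact Finset.le_sup' _ (Finset.mem_univ i)
      · calc t = Function.update x j t j := (Function.update_self j t x).symm
          _ ≤ _ := Finset.le_sup' (Function.update x j t) (Finset.mem_univ j)
  have hupdP : ∀ t : ℝ, ∏ i, Function.update x j t i = t * P' := by
    intro t
    rw [Finset.prod_update_of_mem (Finset.mem_univ j), hP'def,
      Finset.sdiff_singleton_eq_erase]
  have hFh : ∀ t : ℝ, Fx (Function.update x j t) = h t := by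
    intro t
    rw [Fx, hupdM t, hupdP t]
  -- denominator positive on [0,1]
  have hd : ∀ t ∈ Set.Icc (0 : ℝ) 1,
      max M' t * (1 - max M' t) + t * P' ≠ 0 := by
    intro t ht
    rcases lt_or_eq_of_le ht.2 with ht1 | ht1
    · have h1 : max M' t < 1 := max_lt hM'1 ht1
      have h2 : 0 < max M' t := lt_of_lt_of_le hM'0 (le_max_left _ _)
      have : 0 < max M' t * (1 - max M' t) + t * P' := by
        have := mul_nonneg ht.1 hP'0.le
        nlinarith
      exact this.ne'
    · subst ht1
      rw [max_eq_right hM'1.le]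
      have : (0:ℝ) < 1 * (1 - 1) + 1 * P' := by simpa using hP'0
      exact this.ne'
  have hcont : ContinuousOn h (Set.Icc (0 : ℝ) 1) := by
    apply ContinuousOn.div
    · exact (continuous_id.mul continuous_const).continuousOn
    · exact (((continuous_const.max continuous_id).mul
        (continuous_const.sub (continuous_const.max continuous_id))).add
        (continuous_id.mul continuous_const)).continuousOn
    · exact hd
  have h0 : h 0 = 0 := by simp [hhdef]
  have h1 : h 1 = 1 := by
    simp only [hhdef, max_eq_right hM'1.le, one_mul]
    norm_num
    exact hP'0.ne'
  have hivt := intermediate_value_Ioo (zero_le_one (α := ℝ)) hcont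
  rw [h0, h1] at hivt
  intro c hc
  obtain ⟨t, ht, htc⟩ := hivt hc
  refine ⟨t, ht, ?_⟩
  show pFun (Function.update x j t) = c
  rw [pFun_eq_Fx (update_box hx ht), hFh t, htc]

end S8

theorem statement8 (k : ℕ) (hk : 1 ≤ k) :
    (∀ x : Fin (k + 1) → ℝ, (∀ i, x i ∈ Set.Ioo (0 : ℝ) 1) →
      ∀ σ τ : Equiv.Perm (Fin (k + 1)),
        Monotone (x ∘ σ) → Monotone (x ∘ τ) → pVal σ x = pVal τ x) ∧
    (∀ x : Fin (k + 1) → ℝ, (∀ i, x i ∈ Set.Ioo (0 : ℝ) 1) →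
      pFun x ∈ Set.Ioo (0 : ℝ) 1) ∧
    (∀ x : Fin (k + 1) → ℝ, (∀ i, x i ∈ Set.Ioo (0 : ℝ) 1) → ∀ j : Fin (k + 1),
      StrictMonoOn (fun t => pFun (Function.update x j t)) (Set.Ioo (0 : ℝ) 1) ∧
      Set.SurjOn (fun t => pFun (Function.update x j t))
        (Set.Ioo (0 : ℝ) 1) (Set.Ioo (0 : ℝ) 1)) ∧
    (∀ x y : Fin (k + 1) → ℝ, (∀ i, x i ∈ Set.Ioo (0 : ℝ) 1) →
      (∀ i, y i ∈ Set.Ioo (0 : ℝ) 1) →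
      (∀ i, x i ≤ y i) → x ≠ y → pFun x < pFun y) := by
  refine ⟨?_, ?_, ?_, ?_⟩
  · intro x hx σ τ hσ hτ
    rw [S8.pVal_eq_Fx hx σ hσ, S8.pVal_eq_Fx hx τ hτ]
  · intro x hx
    rw [S8.pFun_eq_Fx hx]
    exact S8.Fx_mem hx
  · intro x hx j
    refine ⟨?_, S8.surjOn hk hx j⟩
    intro a ha b hb hab
    have hxa := S8.update_box (j := j) hx ha
    have hxb := S8.update_box (j := j) hx hb
    show pFun (Function.update x j a) < pFun (Function.update x j b)
    rw [S8.pFun_eq_Fx hxa, S8.pFun_eq_Fx hxb]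
    refine S8.Fx_lt hxa hxb ?_ j ?_
    · intro i
      rcases eq_or_ne i j with h | h
      · subst h; rw [Function.update_self, Function.update_self]; exact hab.le
      · rw [Function.update_of_ne h, Function.update_of_ne h]
    · rw [Function.update_self, Function.update_self]; exact hab
  · intro x y hx hy hle hne
    rw [S8.pFun_eq_Fx hx, S8.pFun_eq_Fx hy]
    have hstrict : ∃ i, x i < y i := by
      by_contra hcon
      push_neg at hcon
      exact hne (funext fun i => le_antisymm (hle i) (hcon i))
    obtain ⟨i₀, hi₀⟩ := hstrict
    exact S8.Fx_lt hx hy hle i₀ hi₀
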